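/- Given n ≥ 3 pairwise distinct positive real numbers r_1, ..., r_n, there exist points v_1, ..., v_n in the plane with ‖v_i‖ = r_i for each i such that every v_i is an extreme point of the convex hull of {v_1, ..., v_n} and the origin lies in the interior of this convex hull. -/

import Mathlib

open scoped InnerProductSpace

theorem aux_inner_lt (u w : EuclideanSpace ℝ (Fin 2)) (h : ⟪u,u⟫_ℝ = ⟪w,w⟫_ℝ) (hne : u ≠ w) :
    ⟪w,u⟫_ℝ < ⟪w,w⟫_ℝ := by
  have h1 : (0:ℝ) < ⟪w-u, w-u⟫_ℝ := by
    rcases lt_or_eq_of_le (real_inner_self_nonneg (x := w - u)) with h' | h'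
    · exact h'
    · exact absurd ((inner_self_eq_zero (𝕜 := ℝ)).1 h'.symm) (sub_ne_zero.2 hne.symm)
  have h2 : ⟪w-u,w-u⟫_ℝ = ⟪w,w⟫_ℝ - 2*⟪w,u⟫_ℝ + ⟪u,u⟫_ℝ := by
    rw [inner_sub_left, inner_sub_right, inner_sub_right, real_inner_comm u w]; ring
  linarith

theorem aux_triangle (p : Fin 3 → EuclideanSpace ℝ (Fin 2)) (w : Fin 3 → ℝ)
    (hw : ∀ i, 0 < w i) (hsum : ∑ i, w i = 1) (hcomb : ∑ i, w i • p i = 0)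
    (hind : AffineIndependent ℝ p) :
    (0 : EuclideanSpace ℝ (Fin 2)) ∈ interior (convexHull ℝ (Set.range p)) := by
  have htop : affineSpan ℝ (Set.range p) = ⊤ :=
    hind.affineSpan_eq_top_iff_card_eq_finrank_add_one.2 (by simp)
  let B : AffineBasis (Fin 3) ℝ (EuclideanSpace ℝ (Fin 2)) := ⟨p, hind, htop⟩
  have hr : Set.range ⇑B = Set.range p := rfl
  have h0 : (0 : EuclideanSpace ℝ (Fin 2)) = Finset.univ.affineCombination ℝ p w := by
    rw [Finset.affineCombination_eq_linear_combination _ _ _ (by simpa using hsum)]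
    exact hcomb.symm
  rw [← hr, B.interior_convexHull]
  intro i
  have hcoord : B.coord i (Finset.univ.affineCombination ℝ p w) = w i :=
    B.coord_apply_combination_of_mem (Finset.mem_univ i) (by simpa using hsum)
  rw [← h0] at hcoord
  rw [hcoord]
  exact hw i

set_option maxHeartbeats 4000000 in
theorem stmt0 (n : ℕ) (hn : 3 ≤ n) (r : Fin n → ℝ)
    (hpos : ∀ i, 0 < r i) (hdist : Function.Injective r) :
    ∃ v : Fin n → EuclideanSpace ℝ (Fin 2),
      (∀ i, ‖v i‖ = r i) ∧
      (∀ i, v i ∉ convexHull ℝ (v '' {j | j ≠ i})) ∧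
      (0 : EuclideanSpace ℝ (Fin 2)) ∈ interior (convexHull ℝ (Set.range v)) := by
  classical
  -- choose special indices
  have hne : (Finset.univ : Finset (Fin n)).Nonempty := ⟨⟨0, by omega⟩, Finset.mem_univ _⟩
  obtain ⟨i0, -, hmin0⟩ := Finset.exists_min_image Finset.univ r hne
  have h1 : (Finset.univ.erase i0).Nonempty := by
    rw [← Finset.card_pos, Finset.card_erase_of_mem (Finset.mem_univ _), Finset.card_univ,
      Fintype.card_fin]
    omega
  obtain ⟨i2, hi2mem, hmin2⟩ := Finset.exists_min_image _ r h1
  have hi20 : i2 ≠ i0 := (Finset.mem_erase.1 hi2mem).1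
  have h2 : ((Finset.univ.erase i0).erase i2).Nonempty := by
    rw [← Finset.card_pos, Finset.card_erase_of_mem hi2mem,
      Finset.card_erase_of_mem (Finset.mem_univ _), Finset.card_univ, Fintype.card_fin]
    omega
  obtain ⟨i3, hi3mem⟩ := h2
  have hi32 : i3 ≠ i2 := (Finset.mem_erase.1 hi3mem).1
  have hi30 : i3 ≠ i0 := (Finset.mem_erase.1 (Finset.mem_erase.1 hi3mem).2).1
  obtain ⟨iM, -, hmax⟩ := Finset.exists_max_image Finset.univ r hne
  have hmle : ∀ j, r i0 ≤ r j := fun j => hmin0 j (Finset.mem_univ j)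
  have hm2le : ∀ j, j ≠ i0 → r i2 ≤ r j := fun j hj =>
    hmin2 j (Finset.mem_erase.2 ⟨hj, Finset.mem_univ j⟩)
  have hrM : ∀ j, r j ≤ r iM := fun j => hmax j (Finset.mem_univ j)
  have hm0 : 0 < r i0 := hpos i0
  have hm20 : 0 < r i2 := hpos i2
  have hmm2 : r i0 < r i2 := lt_of_le_of_ne (hmle i2) (fun h => hi20 (hdist h).symm)
  have hm2r3 : r i2 < r i3 := lt_of_le_of_ne (hm2le i3 hi30) (fun h => hi32 (hdist h).symm)
  -- parameters
  set P : ℝ := (r i0^2 + 2*r i2^2)/3 with hPdef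
  set S : ℝ := r iM + 3*r i2 + P/r i0 with hSdef
  set c1 : ℝ := P/S with hc1def
  set d : ℝ := (S - c1)/2 with hddef
  set x : Fin n → ℝ := fun j => (r j^2 - P)/(2*d) with hxdef
  set y : Fin n → ℝ := fun j => Real.sqrt (r j^2 - x j^2) with hydef
  set σ : Fin n → ℝ := fun j => if j = i2 then -1 else 1 with hσdef
  set v : Fin n → EuclideanSpace ℝ (Fin 2) := fun j => !₂[x j, σ j * y j] with hvdef
  set q : EuclideanSpace ℝ (Fin 2) := !₂[d, 0] with hqdef
  -- basic inequalities on parameters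
  have hP1 : r i0^2 < P := by rw [hPdef]; nlinarith
  have hP2 : P < r i2^2 := by rw [hPdef]; nlinarith
  have hPpos : 0 < P := lt_trans (by positivity) hP1
  have hS0 : 0 < S := by
    have h4 : 0 < P/r i0 := div_pos hPpos hm0
    rw [hSdef]; nlinarith [hpos iM]
  have hc10 : 0 < c1 := by rw [hc1def]; exact div_pos hPpos hS0
  have hc1S : c1 * S = P := by rw [hc1def]; field_simp
  have hc1m : c1 < r i0 := by
    rw [hc1def, div_lt_iff₀ hS0]
    have hms : r i0 * S = r i0 * r iM + 3*(r i0)*(r i2) + P := by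
      rw [hSdef]; field_simp
    nlinarith [hpos iM, hmle iM]
  have hcS : c1 < S := lt_of_lt_of_le (lt_of_lt_of_le hc1m (hmle iM))
    (by rw [hSdef]; nlinarith [div_pos hPpos hm0])
  have hd0 : 0 < d := by
    rw [hddef]; exact div_pos (by linarith) (by norm_num)
  have hdm2 : r i2 ≤ d := by
    rw [hddef, hSdef]
    have h4 : 0 < P/r i0 := div_pos hPpos hm0
    nlinarith [hmle iM]
  have h2d : (2:ℝ)*d = S - c1 := by rw [hddef]; ring
  have hrS : ∀ j, r j < S := by
    intro j
    rw [hSdef]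
    nlinarith [hrM j, div_pos hPpos hm0]
  have hrc : ∀ j, c1 < r j := fun j => lt_of_lt_of_le hc1m (hmle j)
  -- basic facts about coordinates
  have hxval : ∀ j, x j = (r j^2 - P)/(2*d) := fun j => by simp only [hxdef]
  have h2dx : ∀ j, 2*d*(x j) = r j^2 - P := by
    intro j; rw [hxval j]; field_simp
  have hposxy : ∀ j, 0 < r j^2 - x j^2 := by
    intro j
    have hid : r j^2 - x j^2 = ((S - r j)*(r j + c1)*((r j - c1)*(S + r j)))/(2*d)^2 := by
      have hx : x j = (r j^2 - c1*S)/(2*d) := by rw [hxval j, hc1S]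
      rw [hx]
      field_simp
      rw [show d = (S - c1)/2 by linarith]
      ring
    rw [hid]
    have h4 := hrS j
    have h5 := hrc j
    have h6 := hpos j
    exact div_pos (mul_pos (mul_pos (by linarith) (by linarith))
      (mul_pos (by linarith) (by linarith))) (by positivity)
  have hy2 : ∀ j, y j^2 = r j^2 - x j^2 := by
    intro j; simp only [hydef]; exact Real.sq_sqrt (hposxy j).le
  have hy0 : ∀ j, 0 < y j := by
    intro j; simp only [hydef]; exact Real.sqrt_pos.2 (hposxy j)
  have hσ2 : ∀ j, σ j ^ 2 = 1 := by
    intro j; simp only [hσdef]; by_cases h : j = i2 <;> simp [h]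
  have hσ0 : σ i0 = 1 := by simp only [hσdef]; simp [Ne.symm hi20]
  have hσi2 : σ i2 = -1 := by simp only [hσdef]; simp
  have hσ3 : σ i3 = 1 := by simp only [hσdef]; simp [hi32]
  have hvc0 : ∀ j, v j 0 = x j := by intro j; simp [hvdef]
  have hvc1 : ∀ j, v j 1 = σ j * y j := by intro j; simp [hvdef]
  have hq0 : q 0 = d := by rw [hqdef]; simp
  have hq1 : q 1 = (0:ℝ) := by rw [hqdef]; simp
  -- sign facts
  have hxa : x i0 < 0 := by
    rw [hxval i0]
    apply div_neg_of_neg_of_pos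
    · nlinarith [hP1]
    · linarith
  have hxb : 0 < x i2 := by
    rw [hxval i2]
    apply div_pos
    · nlinarith [hP2]
    · linarith
  have hxc : 0 < x i3 := by
    rw [hxval i3]
    apply div_pos
    · nlinarith [hP2, hm2r3, hm20]
    · linarith
  have hxb_le : x i2 ≤ r i2/2 := by
    rw [hxval i2]
    rw [div_le_div_iff₀ (by linarith) (by norm_num)]
    nlinarith [hdm2, hPpos, hm20]
  -- forget all definitions: work only with stated facts
  clear_value P S c1 d x y σ v q
  have hinner : ∀ z w : EuclideanSpace ℝ (Fin 2), ⟪z, w⟫_ℝ = z 0 * w 0 + z 1 * w 1 := by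
    intro z w
    simp [PiLp.inner_apply, Fin.sum_univ_two, RCLike.inner_apply]; ring
  have hnormsq : ∀ j, x j^2 + (σ j * y j)^2 = r j^2 := by
    intro j
    linear_combination y j^2 * hσ2 j + hy2 j
  have hvnorm : ∀ j, ‖v j‖ = r j := by
    intro j
    have e1 : ⟪v j, v j⟫_ℝ = r j^2 := by
      rw [hinner, hvc0, hvc1]
      linear_combination y j^2 * hσ2 j + hy2 j
    rw [norm_eq_sqrt_real_inner, e1, Real.sqrt_sq (hpos j).le]
  have hvinj : Function.Injective v := by
    intro a b hab
    apply hdist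
    rw [← hvnorm a, ← hvnorm b, hab]
  have hsub0 : ∀ j, (v j - q) 0 = x j - d := by
    intro j
    rw [PiLp.sub_apply, hvc0, hq0]
  have hsub1 : ∀ j, (v j - q) 1 = σ j * y j := by
    intro j
    rw [PiLp.sub_apply, hvc1, hq1, sub_zero]
  have hsph : ∀ j, ⟪v j - q, v j - q⟫_ℝ = d^2 + P := by
    intro j
    rw [hinner, hsub0, hsub1]
    linear_combination y j^2 * hσ2 j + hy2 j - h2dx j
  -- extremeness
  have extreme : ∀ i, v i ∉ convexHull ℝ (v '' {j | j ≠ i}) := by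
    intro i hmem
    have hsubset : convexHull ℝ (v '' {j | j ≠ i}) ⊆ {z | ⟪v i - q, z⟫_ℝ < ⟪v i - q, v i⟫_ℝ} := by
      apply convexHull_min
      · rintro z ⟨j, (hj : j ≠ i), rfl⟩
        have hnevq : v j - q ≠ v i - q := by
          intro h
          exact hj (hvinj (sub_left_inj.1 h))
        have hlt := aux_inner_lt (v j - q) (v i - q) (by rw [hsph j, hsph i]) hnevq
        have hj1 : ⟪v i - q, v j⟫_ℝ = ⟪v i - q, v j - q⟫_ℝ + ⟪v i - q, q⟫_ℝ := by
          rw [← inner_add_right, sub_add_cancel]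
        have hi1 : ⟪v i - q, v i⟫_ℝ = ⟪v i - q, v i - q⟫_ℝ + ⟪v i - q, q⟫_ℝ := by
          rw [← inner_add_right, sub_add_cancel]
        simp only [Set.mem_setOf_eq]
        rw [hj1, hi1]
        linarith
      · exact convex_halfSpace_lt
          ⟨fun a b => inner_add_right _ _ _, fun c a => real_inner_smul_right _ _ _⟩ _
    have hcontra := hsubset hmem
    simp only [Set.mem_setOf_eq] at hcontra
    exact lt_irrefl _ hcontra
  -- quantitative facts for the triangle
  have hya_le : y i0 ≤ r i0 := by
    nlinarith [hy2 i0, sq_nonneg (x i0), hy0 i0, hm0]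
  have hyb_ge : r i2/2 ≤ y i2 := by
    nlinarith [hy2 i2, hxb, hxb_le, hy0 i2, hm20]
  have hdet0 : y i0 * (r i2^2 - P) < y i2 * (P - r i0^2) := by
    nlinarith [mul_le_mul_of_nonneg_right hya_le (sub_nonneg.2 hP2.le),
      mul_le_mul_of_nonneg_right hyb_ge (sub_nonneg.2 hP1.le),
      mul_lt_mul_of_pos_right hmm2 (sub_pos.2 hP2)]
  -- barycentric weights
  set A : ℝ := x i2 * y i3 + y i2 * x i3 with hA
  set Bq : ℝ := x i3 * y i0 - y i3 * x i0 with hB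
  set Cq : ℝ := -(x i0) * y i2 - y i0 * x i2 with hC
  have hApos : 0 < A := by
    rw [hA]; have := hy0 i2; have := hy0 i3; positivity
  have hBpos : 0 < Bq := by
    rw [hB]
    have h4 := hy0 i0; have h5 := hy0 i3
    nlinarith [hxc, hxa]
  have hCpos : 0 < Cq := by
    have hCd : Cq * (2*d) = y i2 * (P - r i0^2) - y i0 * (r i2^2 - P) := by
      rw [hC, hxval i0, hxval i2]
      field_simp
      ring
    nlinarith [hdet0, hd0]
  set T : ℝ := A + Bq + Cq with hT
  have hT0 : 0 < T := by rw [hT]; linarith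
  clear_value A Bq Cq T
  set p : Fin 3 → EuclideanSpace ℝ (Fin 2) := ![v i0, v i2, v i3] with hpdef
  set wts : Fin 3 → ℝ := ![A/T, Bq/T, Cq/T] with hwdef
  have hwts0 : wts 0 = A/T := by rw [hwdef]; simp
  have hwts1 : wts 1 = Bq/T := by rw [hwdef]; simp
  have hwts2 : wts 2 = Cq/T := by rw [hwdef]; simp
  have hp0 : p 0 = v i0 := by rw [hpdef]; simp
  have hp1 : p 1 = v i2 := by rw [hpdef]; simp
  have hp2 : p 2 = v i3 := by rw [hpdef]; simp
  clear_value p wts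
  have hwpos : ∀ i, 0 < wts i := by
    intro i
    fin_cases i
    · show 0 < wts 0
      rw [hwts0]; positivity
    · show 0 < wts 1
      rw [hwts1]; positivity
    · show 0 < wts 2
      rw [hwts2]; positivity
  have hwsum : ∑ i, wts i = 1 := by
    rw [Fin.sum_univ_three, hwts0, hwts1, hwts2, hT]
    field_simp
  have hcomp : ∀ k : Fin 2, (wts 0 • p 0 + wts 1 • p 1 + wts 2 • p 2) k = 0 := by
    have hval : ∀ k : Fin 2, (wts 0 • p 0 + wts 1 • p 1 + wts 2 • p 2) k
        = wts 0 * p 0 k + wts 1 * p 1 k + wts 2 * p 2 k := fun _ => rfl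
    intro k
    rw [hval, hwts0, hwts1, hwts2, hp0, hp1, hp2]
    fin_cases k
    · show A/T * v i0 0 + Bq/T * v i2 0 + Cq/T * v i3 0 = 0
      rw [hvc0 i0, hvc0 i2, hvc0 i3]
      rw [div_mul_eq_mul_div, div_mul_eq_mul_div, div_mul_eq_mul_div, ← add_div,
        ← add_div, div_eq_iff (ne_of_gt hT0)]
      rw [hA, hB, hC]; ring
    · show A/T * v i0 1 + Bq/T * v i2 1 + Cq/T * v i3 1 = 0
      rw [hvc1 i0, hvc1 i2, hvc1 i3, hσ0, hσi2, hσ3]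
      rw [div_mul_eq_mul_div, div_mul_eq_mul_div, div_mul_eq_mul_div, ← add_div,
        ← add_div, div_eq_iff (ne_of_gt hT0)]
      rw [hA, hB, hC]; ring
  have hcomb : ∑ i, wts i • p i = 0 := by
    rw [Fin.sum_univ_three]
    ext jj
    exact hcomp jj
  have hind : AffineIndependent ℝ p := by
    rw [affineIndependent_iff_not_collinear]
    intro hcol
    obtain ⟨dir, hdir⟩ := (collinear_iff_of_mem (Set.mem_range_self (0 : Fin 3))).1 hcol
    obtain ⟨t1, ht1⟩ := hdir (p 1) (Set.mem_range_self 1)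
    obtain ⟨t2, ht2⟩ := hdir (p 2) (Set.mem_range_self 2)
    have e1 : ∀ k : Fin 2, p 1 k = t1 * dir k + p 0 k := by
      intro k; rw [ht1]; rfl
    have e2 : ∀ k : Fin 2, p 2 k = t2 * dir k + p 0 k := by
      intro k; rw [ht2]; rfl
    have hD : (p 1 0 - p 0 0)*(p 2 1 - p 0 1) - (p 1 1 - p 0 1)*(p 2 0 - p 0 0) = 0 := by
      rw [e1 0, e1 1, e2 0, e2 1]; ring
    rw [hp0, hp1, hp2, hvc0 i0, hvc0 i2, hvc0 i3, hvc1 i0, hvc1 i2, hvc1 i3,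
      hσ0, hσi2, hσ3] at hD
    have hTz : T = 0 := by
      rw [hT, hA, hB, hC]
      linear_combination hD
    linarith
  refine ⟨v, hvnorm, extreme, ?_⟩
  have h0mem := aux_triangle p wts hwpos hwsum hcomb hind
  have hsubr : Set.range p ⊆ Set.range v := by
    rintro z ⟨k, rfl⟩
    fin_cases k
    · exact ⟨i0, hp0.symm⟩
    · exact ⟨i2, hp1.symm⟩
    · exact ⟨i3, hp2.symm⟩
  exact interior_mono (convexHull_mono hsubr) h0mem
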